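/- Let K ≥ 1, j ∈ [K], and let z, z̄ ∈ [0,∞)^K satisfy ∑_{i∈[K]} z_i = 1, ∑_{i∈[K]} z̄_i ≤ 1, and z̄_i ≥ z_i for all i ∈ [K] with i ≠ j. Then ∑_{i∈[K]} z̄_i^{4/3} ≤ 2·∑_{i∈[K]} z_i^{4/3}. -/

import Mathlib

open Finset NNReal

lemma sup43 {a b : ℝ} (ha : 0 ≤ a) (hb : 0 ≤ b) :
    a ^ ((4:ℝ)/3) + b ^ ((4:ℝ)/3) ≤ (a + b) ^ ((4:ℝ)/3) := by
  have := NNReal.add_rpow_le_rpow_add (⟨a, ha⟩ : ℝ≥0) ⟨b, hb⟩ (by norm_num : (1:ℝ) ≤ 4/3)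
  have h2 := NNReal.coe_le_coe.2 this
  push_cast [NNReal.coe_rpow] at h2
  exact h2

lemma sub13 {a b : ℝ} (ha : 0 ≤ a) (hb : 0 ≤ b) :
    (a + b) ^ ((1:ℝ)/3) ≤ a ^ ((1:ℝ)/3) + b ^ ((1:ℝ)/3) := by
  have := NNReal.rpow_add_le_add_rpow (⟨a, ha⟩ : ℝ≥0) ⟨b, hb⟩ (by norm_num : (0:ℝ) ≤ 1/3)
    (by norm_num : (1:ℝ)/3 ≤ 1)
  have h2 := NNReal.coe_le_coe.2 this
  push_cast [NNReal.coe_rpow] at h2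
  exact h2

lemma ptwise {a b : ℝ} (ha : 0 ≤ a) (hb : 0 ≤ b) :
    (a + b) ^ ((4:ℝ)/3) ≤ a ^ ((4:ℝ)/3) + a * b ^ ((1:ℝ)/3) + b * a ^ ((1:ℝ)/3) + b ^ ((4:ℝ)/3) := by
  have hab : 0 ≤ a + b := by linarith
  have e : ∀ x : ℝ, 0 ≤ x → x ^ ((4:ℝ)/3) = x * x ^ ((1:ℝ)/3) := by
    intro x hx
    rw [show (4:ℝ)/3 = 1 + 1/3 by norm_num, Real.rpow_add' hx (by norm_num), Real.rpow_one]
  rw [e _ hab, e _ ha, e _ hb]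
  calc (a + b) * (a + b) ^ ((1:ℝ)/3)
      ≤ (a + b) * (a ^ ((1:ℝ)/3) + b ^ ((1:ℝ)/3)) :=
        mul_le_mul_of_nonneg_left (sub13 ha hb) hab
    _ = a * a ^ ((1:ℝ)/3) + a * b ^ ((1:ℝ)/3) + b * a ^ ((1:ℝ)/3) + b * b ^ ((1:ℝ)/3) := by ring

lemma sum_sup43 {ι : Type*} (s : Finset ι) (d : ι → ℝ) (hd : ∀ i ∈ s, 0 ≤ d i) :
    ∑ i ∈ s, (d i) ^ ((4:ℝ)/3) ≤ (∑ i ∈ s, d i) ^ ((4:ℝ)/3) := by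
  induction s using Finset.cons_induction with
  | empty => simp [Real.zero_rpow (by norm_num : (4:ℝ)/3 ≠ 0)]
  | cons a s ha ih =>
    rw [Finset.sum_cons, Finset.sum_cons]
    have hda : 0 ≤ d a := hd a (Finset.mem_cons_self a s)
    have hds : ∀ i ∈ s, 0 ≤ d i := fun i hi => hd i (Finset.mem_cons_of_mem hi)
    have hsum : 0 ≤ ∑ i ∈ s, d i := Finset.sum_nonneg hds
    calc (d a) ^ ((4:ℝ)/3) + ∑ i ∈ s, (d i) ^ ((4:ℝ)/3)
        ≤ (d a) ^ ((4:ℝ)/3) + (∑ i ∈ s, d i) ^ ((4:ℝ)/3) := by linarith [ih hds]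
      _ ≤ (d a + ∑ i ∈ s, d i) ^ ((4:ℝ)/3) := sup43 hda hsum

/-- The 4/3-power version of Lemma 28 of Ito (2021). -/
theorem power_sum_domination
    (K : ℕ) (hK : 1 ≤ K) (j : Fin K)
    (z zbar : Fin K → ℝ) (hz : ∀ i, 0 ≤ z i) (hzbar : ∀ i, 0 ≤ zbar i)
    (hzsum : ∑ i, z i = 1) (hzbarsum : ∑ i, zbar i ≤ 1)
    (hdom : ∀ i, i ≠ j → z i ≤ zbar i) :
    ∑ i, (zbar i) ^ ((4 : ℝ) / 3) ≤ 2 * ∑ i, (z i) ^ ((4 : ℝ) / 3) := by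
  classical
  set E : Finset (Fin K) := Finset.univ.erase j with hE
  set d : Fin K → ℝ := fun i => zbar i - z i with hd
  have hdE : ∀ i ∈ E, 0 ≤ d i := by
    intro i hi
    have : i ≠ j := (Finset.mem_erase.1 hi).1
    simp [hd]; linarith [hdom i this]
  -- split sums
  have hsplitz : z j + ∑ i ∈ E, z i = ∑ i, z i := Finset.add_sum_erase _ z (Finset.mem_univ j)
  have hsplitzb : zbar j + ∑ i ∈ E, zbar i = ∑ i, zbar i :=
    Finset.add_sum_erase _ zbar (Finset.mem_univ j)
  have hsplitzp : (z j) ^ ((4:ℝ)/3) + ∑ i ∈ E, (z i) ^ ((4:ℝ)/3)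
      = ∑ i, (z i) ^ ((4:ℝ)/3) := Finset.add_sum_erase _ (fun i => (z i) ^ ((4:ℝ)/3)) (Finset.mem_univ j)
  have hsplitzbp : (zbar j) ^ ((4:ℝ)/3) + ∑ i ∈ E, (zbar i) ^ ((4:ℝ)/3)
      = ∑ i, (zbar i) ^ ((4:ℝ)/3) := Finset.add_sum_erase _ (fun i => (zbar i) ^ ((4:ℝ)/3)) (Finset.mem_univ j)
  have hEd : ∑ i ∈ E, zbar i = ∑ i ∈ E, z i + ∑ i ∈ E, d i := by
    rw [← Finset.sum_add_distrib]; apply Finset.sum_congr rfl; intro i _; simp [hd]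
  set D : ℝ := ∑ i ∈ E, d i with hD
  have hDnn : 0 ≤ D := Finset.sum_nonneg hdE
  have hkey : zbar j + D ≤ z j := by
    have h1 : zbar j + (∑ i ∈ E, z i + D) ≤ 1 := by
      rw [← hEd, hsplitzb]; exact hzbarsum
    have h2 : z j + ∑ i ∈ E, z i = 1 := by rw [hsplitz, hzsum]
    linarith
  have hDzj : D ≤ z j := by linarith [hzbar j]
  have hzjnn : 0 ≤ z j := hz j
  -- abbreviations
  set B' : ℝ := ∑ i ∈ E, (z i) ^ ((4:ℝ)/3) with hB'
  have hB'nn : 0 ≤ B' := Finset.sum_nonneg fun i _ => Real.rpow_nonneg (hz i) _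
  set s43 : ℝ := (z j) ^ ((4:ℝ)/3) with hs43
  have hs43nn : 0 ≤ s43 := Real.rpow_nonneg hzjnn _
  -- sum of d^{4/3}
  have hS3 : ∑ i ∈ E, (d i) ^ ((4:ℝ)/3) ≤ D ^ ((4:ℝ)/3) := sum_sup43 E d hdE
  have hD43 : D ^ ((4:ℝ)/3) ≤ s43 := Real.rpow_le_rpow hDnn hDzj (by norm_num)
  have hS3' : ∑ i ∈ E, (d i) ^ ((4:ℝ)/3) ≤ s43 := hS3.trans hD43
  -- Hölder for S1 = ∑ z i * d i ^{1/3}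
  have hconj : Real.HolderConjugate (4/3) 4 := Real.holderConjugate_iff.mpr ⟨by norm_num, by norm_num⟩
  have hS1 : ∑ i ∈ E, z i * (d i) ^ ((1:ℝ)/3) ≤ B' ^ ((3:ℝ)/4) * s43 ^ ((1:ℝ)/4) := by
    have hH := Real.inner_le_Lp_mul_Lq E z (fun i => (d i) ^ ((1:ℝ)/3)) hconj
    have e1 : ∑ i ∈ E, |z i| ^ ((4:ℝ)/3) = B' := by
      apply Finset.sum_congr rfl; intro i _; rw [abs_of_nonneg (hz i)]
    have e2 : ∑ i ∈ E, |(d i) ^ ((1:ℝ)/3)| ^ (4:ℝ) = ∑ i ∈ E, (d i) ^ ((4:ℝ)/3) := by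
      apply Finset.sum_congr rfl; intro i hi
      rw [abs_of_nonneg (Real.rpow_nonneg (hdE i hi) _), ← Real.rpow_mul (hdE i hi)]
      norm_num
    rw [e1, e2] at hH
    calc ∑ i ∈ E, z i * (d i) ^ ((1:ℝ)/3)
        ≤ B' ^ ((1:ℝ)/(4/3)) * (∑ i ∈ E, (d i) ^ ((4:ℝ)/3)) ^ ((1:ℝ)/4) := hH
      _ ≤ B' ^ ((3:ℝ)/4) * s43 ^ ((1:ℝ)/4) := by
          rw [show (1:ℝ)/(4/3) = 3/4 by norm_num]
          refine mul_le_mul_of_nonneg_left ?_ (Real.rpow_nonneg hB'nn _)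
          exact Real.rpow_le_rpow
            (Finset.sum_nonneg fun i hi => Real.rpow_nonneg (hdE i hi) _) hS3' (by norm_num)
  -- Hölder for S2 = ∑ z i ^{1/3} * d i
  have hS2 : ∑ i ∈ E, (z i) ^ ((1:ℝ)/3) * d i ≤ B' ^ ((1:ℝ)/4) * s43 ^ ((3:ℝ)/4) := by
    have hH := Real.inner_le_Lp_mul_Lq E (fun i => (z i) ^ ((1:ℝ)/3)) d hconj.symm
    have e1 : ∑ i ∈ E, |(z i) ^ ((1:ℝ)/3)| ^ (4:ℝ) = B' := by
      apply Finset.sum_congr rfl; intro i _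
      rw [abs_of_nonneg (Real.rpow_nonneg (hz i) _), ← Real.rpow_mul (hz i)]
      norm_num
    have e2 : ∑ i ∈ E, |d i| ^ ((4:ℝ)/3) = ∑ i ∈ E, (d i) ^ ((4:ℝ)/3) := by
      apply Finset.sum_congr rfl; intro i hi
      rw [abs_of_nonneg (hdE i hi)]
    rw [e1, e2] at hH
    calc ∑ i ∈ E, (z i) ^ ((1:ℝ)/3) * d i
        ≤ B' ^ ((1:ℝ)/4) * (∑ i ∈ E, (d i) ^ ((4:ℝ)/3)) ^ ((1:ℝ)/(4/3)) := hH
      _ ≤ B' ^ ((1:ℝ)/4) * s43 ^ ((3:ℝ)/4) := by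
          rw [show (1:ℝ)/(4/3) = 3/4 by norm_num]
          refine mul_le_mul_of_nonneg_left ?_ (Real.rpow_nonneg hB'nn _)
          exact Real.rpow_le_rpow
            (Finset.sum_nonneg fun i hi => Real.rpow_nonneg (hdE i hi) _) hS3' (by norm_num)
  -- AM-GM bounds
  have hAM1 : B' ^ ((3:ℝ)/4) * s43 ^ ((1:ℝ)/4) ≤ 3/4 * B' + 1/4 * s43 :=
    Real.geom_mean_le_arith_mean2_weighted (by norm_num) (by norm_num) hB'nn hs43nn (by norm_num)
  have hAM2 : B' ^ ((1:ℝ)/4) * s43 ^ ((3:ℝ)/4) ≤ 1/4 * B' + 3/4 * s43 :=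
    Real.geom_mean_le_arith_mean2_weighted (by norm_num) (by norm_num) hB'nn hs43nn (by norm_num)
  -- pointwise expansion
  have hpt : ∑ i ∈ E, (zbar i) ^ ((4:ℝ)/3)
      ≤ B' + (∑ i ∈ E, z i * (d i) ^ ((1:ℝ)/3)) + (∑ i ∈ E, (z i) ^ ((1:ℝ)/3) * d i)
        + ∑ i ∈ E, (d i) ^ ((4:ℝ)/3) := by
    have hle : ∑ i ∈ E, (zbar i) ^ ((4:ℝ)/3)
        ≤ ∑ i ∈ E, ((z i) ^ ((4:ℝ)/3) + z i * (d i) ^ ((1:ℝ)/3)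
            + d i * (z i) ^ ((1:ℝ)/3) + (d i) ^ ((4:ℝ)/3)) := by
      refine Finset.sum_le_sum fun i hi => ?_
      have hzb : zbar i = z i + d i := by simp [hd]
      rw [hzb]
      exact ptwise (hz i) (hdE i hi)
    refine hle.trans (le_of_eq ?_)
    rw [Finset.sum_add_distrib, Finset.sum_add_distrib, Finset.sum_add_distrib]
    congr 1
    · congr 1
      apply Finset.sum_congr rfl; intro i _; ring
  -- combine head term with sum of d^{4/3}
  have hhead : (zbar j) ^ ((4:ℝ)/3) + ∑ i ∈ E, (d i) ^ ((4:ℝ)/3) ≤ s43 := by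
    calc (zbar j) ^ ((4:ℝ)/3) + ∑ i ∈ E, (d i) ^ ((4:ℝ)/3)
        ≤ (zbar j) ^ ((4:ℝ)/3) + D ^ ((4:ℝ)/3) := by linarith
      _ ≤ (zbar j + D) ^ ((4:ℝ)/3) := sup43 (hzbar j) hDnn
      _ ≤ s43 := Real.rpow_le_rpow (by linarith [hzbar j]) hkey (by norm_num)
  linarith [hS1, hS2, hpt, hhead, hsplitzbp, hsplitzp, hAM1, hAM2]
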